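/- Let G = (A, B, E) be a finite connected bipartite graph with at least two vertices. Then α(G) > |V(G)|/2 if and only if |core(G)| ≥ 2. -/

import Mathlib

/-- A set of vertices is independent if no two of its vertices are adjacent. -/
def IsIndep {V : Type*} (G : SimpleGraph V) (s : Set V) : Prop :=
  ∀ u ∈ s, ∀ w ∈ s, ¬ G.Adj u w

open Classical in
/-- The independence number `α(G)`: the maximum cardinality of an independent set. -/
noncomputable def indepNum {V : Type*} (G : SimpleGraph V) [Fintype V] : ℕ :=
  Nat.findGreatest (fun n => ∃ s : Set V, IsIndep G s ∧ s.ncard = n) (Fintype.card V)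

/-- A matching: a set of edges of `G` that are pairwise vertex-disjoint. -/
def IsMatchingSet {V : Type*} (G : SimpleGraph V) (M : Finset (Sym2 V)) : Prop :=
  (↑M : Set (Sym2 V)) ⊆ G.edgeSet ∧
    ∀ e ∈ M, ∀ f ∈ M, e ≠ f → ∀ x : V, ¬(x ∈ e ∧ x ∈ f)

open Classical in
/-- The matching number `μ(G)`: the maximum cardinality of a matching. -/
noncomputable def matchNum {V : Type*} (G : SimpleGraph V) [Fintype V] : ℕ :=
  Nat.findGreatest (fun n => ∃ M : Finset (Sym2 V), IsMatchingSet G M ∧ M.card = n)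
    (Fintype.card V)

/-- A maximum independent set: an independent set of cardinality `α(G)`. -/
def IsMaxIndep {V : Type*} (G : SimpleGraph V) [Fintype V] (s : Set V) : Prop :=
  IsIndep G s ∧ s.ncard = indepNum G

/-- `core(G)`: the intersection of all maximum independent sets of `G`. -/
def core {V : Type*} (G : SimpleGraph V) [Fintype V] : Set V :=
  {v : V | ∀ s : Set V, IsMaxIndep G s → v ∈ s}

/-- `G` is a König-Egerváry graph if `α(G) + μ(G) = |V(G)|`. -/
def IsKonigEgervary {V : Type*} (G : SimpleGraph V) [Fintype V] : Prop :=
  indepNum G + matchNum G = Fintype.card V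

/-- `G - v`: the subgraph of `G` induced on `V \ {v}`. -/
def deleteVert {V : Type*} (G : SimpleGraph V) (v : V) : SimpleGraph {u : V // u ≠ v} :=
  SimpleGraph.comap Subtype.val G

/-- A perfect matching: a matching covering all vertices of `G`. -/
def HasPerfectMatching {V : Type*} (G : SimpleGraph V) : Prop :=
  ∃ M : Finset (Sym2 V), IsMatchingSet G M ∧ ∀ v : V, ∃ e ∈ M, v ∈ e

/-- `N(A)`: the set of all vertices adjacent to some vertex of `A`. -/
def nbhd {V : Type*} (G : SimpleGraph V) (A : Set V) : Set V :=
  {w : V | ∃ u ∈ A, G.Adj u w}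

section Helpers
set_option linter.unusedSectionVars false

open Classical

variable {V : Type*} [Fintype V] {G : SimpleGraph V}

lemma indep_ncard_le {s : Set V} (hs : IsIndep G s) : s.ncard ≤ indepNum G := by
  refine Nat.le_findGreatest ?_ ⟨s, hs, rfl⟩
  have := Set.ncard_le_ncard (Set.subset_univ s) Set.finite_univ
  simpa [Set.ncard_univ] using this

lemma exists_max_indep (G : SimpleGraph V) :
    ∃ s : Set V, IsIndep G s ∧ s.ncard = indepNum G := by
  have h0 : (fun n => ∃ s : Set V, IsIndep G s ∧ s.ncard = n) 0 :=
    ⟨∅, fun u hu => absurd hu (by simp), by simp⟩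
  exact Nat.findGreatest_spec (P := fun n => ∃ s : Set V, IsIndep G s ∧ s.ncard = n)
    (n := Fintype.card V) (Nat.zero_le _) h0

lemma matching_endpoint_injOn {M : Finset (Sym2 V)} (hM : IsMatchingSet G M)
    {g : Sym2 V → V} (hg : ∀ e ∈ M, g e ∈ e) : Set.InjOn g M := by
  intro e he f hf hef
  by_contra hne
  exact hM.2 e he f hf hne (g e) ⟨hg e he, hef ▸ hg f hf⟩

lemma matching_card_le_card_V {M : Finset (Sym2 V)} (hM : IsMatchingSet G M) :
    M.card ≤ Fintype.card V := by
  have hex : ∀ e : Sym2 V, ∃ x, x ∈ e := fun e => Sym2.ind (fun a b => ⟨a, by simp⟩) e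
  classical
  have : Set.InjOn (fun e => Classical.choose (hex e)) M :=
    matching_endpoint_injOn hM (fun e _ => Classical.choose_spec (hex e))
  calc M.card = (M.image (fun e => Classical.choose (hex e))).card :=
        (Finset.card_image_of_injOn (by simpa using this)).symm
    _ ≤ Fintype.card V := Finset.card_le_card (Finset.subset_univ _)

lemma matching_card_le {M : Finset (Sym2 V)} (hM : IsMatchingSet G M) :
    M.card ≤ matchNum G :=
  Nat.le_findGreatest (P := fun n => ∃ M : Finset (Sym2 V), IsMatchingSet G M ∧ M.card = n)
    (matching_card_le_card_V hM) ⟨M, hM, rfl⟩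

lemma exists_max_matching (G : SimpleGraph V) :
    ∃ M : Finset (Sym2 V), IsMatchingSet G M ∧ M.card = matchNum G := by
  have h0 : (fun n => ∃ M : Finset (Sym2 V), IsMatchingSet G M ∧ M.card = n) 0 :=
    ⟨∅, ⟨by simp, by simp⟩, by simp⟩
  exact Nat.findGreatest_spec (P := fun n => ∃ M : Finset (Sym2 V), IsMatchingSet G M ∧ M.card = n)
    (n := Fintype.card V) (Nat.zero_le _) h0
/-- every edge has an endpoint outside any independent set -/
lemma edge_endpoint_not_mem {s : Set V} (hs : IsIndep G s) {e : Sym2 V}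
    (he : e ∈ G.edgeSet) : ∃ x, x ∈ e ∧ x ∉ s := by
  induction e using Sym2.ind with
  | _ a b =>
    rw [SimpleGraph.mem_edgeSet] at he
    by_cases ha : a ∈ s
    · exact ⟨b, by simp, fun hb => hs a ha b hb he⟩
    · exact ⟨a, by simp, ha⟩

lemma matching_card_le_avoid {M : Finset (Sym2 V)} (hM : IsMatchingSet G M)
    {T : Set V} (hex : ∀ e ∈ M, ∃ x, x ∈ e ∧ x ∉ T) : M.card ≤ (Tᶜ : Set V).ncard := by
  classical
  set g : Sym2 V → V := fun e => if h : e ∈ M then Classical.choose (hex e h) else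
    e.out.1 with hg
  have hgm : ∀ e ∈ M, g e ∈ e ∧ g e ∉ T := by
    intro e he; simp only [hg, dif_pos he]; exact Classical.choose_spec (hex e he)
  have hinj : Set.InjOn g M := matching_endpoint_injOn hM (fun e he => (hgm e he).1)
  calc M.card = (M.image g).card := (Finset.card_image_of_injOn (by simpa using hinj)).symm
    _ ≤ (Tᶜ : Set V).toFinset.card := by
        apply Finset.card_le_card
        intro x hx
        simp only [Finset.mem_image] at hx
        obtain ⟨e, he, rfl⟩ := hx
        simpa using (hgm e he).2
    _ = (Tᶜ : Set V).ncard := by rw [Set.ncard_eq_toFinset_card']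

lemma ncard_compl (s : Set V) : (sᶜ : Set V).ncard = Fintype.card V - s.ncard := by
  have := Set.ncard_add_ncard_compl s
  rw [Nat.card_eq_fintype_card] at this
  omega

lemma ncard_le_card (s : Set V) : s.ncard ≤ Fintype.card V := by
  have := Set.ncard_le_ncard (Set.subset_univ s) Set.finite_univ
  simpa [Set.ncard_univ] using this

lemma konig_le (G : SimpleGraph V) : indepNum G + matchNum G ≤ Fintype.card V := by
  obtain ⟨s, hs, hscard⟩ := exists_max_indep G
  obtain ⟨M, hM, hMcard⟩ := exists_max_matching G
  have := matching_card_le_avoid hM (T := s)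
    (fun e he => edge_endpoint_not_mem hs (hM.1 he))
  rw [ncard_compl] at this
  have h2 := ncard_le_card s
  omega

/-- a vertex missed by a maximum matching is in the core, given König equality -/
lemma exposed_mem_core {M : Finset (Sym2 V)} (hM : IsMatchingSet G M)
    (hMcard : M.card = matchNum G) (hKE : indepNum G + matchNum G = Fintype.card V)
    {v : V} (hv : ∀ e ∈ M, v ∉ e) : v ∈ core G := by
  intro s hs
  by_contra hvs
  have hex : ∀ e ∈ M, ∃ x, x ∈ e ∧ x ∉ insert v s := by
    intro e he
    obtain ⟨x, hxe, hxs⟩ := edge_endpoint_not_mem hs.1 (hM.1 he)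
    refine ⟨x, hxe, ?_⟩
    simp only [Set.mem_insert_iff]
    push_neg
    exact ⟨fun h => hv e he (h ▸ hxe), hxs⟩
  have h1 := matching_card_le_avoid hM hex
  rw [ncard_compl] at h1
  have h2 : (insert v s).ncard = s.ncard + 1 :=
    Set.ncard_insert_of_notMem hvs (Set.toFinite s)
  have h3 := ncard_le_card (insert v s)
  rw [h2, hs.2] at h1 h3
  omega
/-- Hall-based: every vertex set `P∖S` (P independent) can be matched into `S`,
for `S` a maximum independent set. -/
lemma konig_side {S P : Set V} (hS : IsIndep G S) (hScard : S.ncard = indepNum G)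
    (hP : IsIndep G P) :
    ∃ f : V → V, Set.InjOn f (P \ S) ∧ ∀ v ∈ P \ S, G.Adj v (f v) ∧ f v ∈ S := by
  classical
  set t : ↥(P \ S) → Finset V := fun v => G.neighborFinset v.1 ∩ S.toFinset with ht
  have hall : ∀ s : Finset ↥(P \ S), s.card ≤ (s.biUnion t).card := by
    intro s
    by_contra hlt
    push_neg at hlt
    set X : Set V := ↑(s.image (Subtype.val)) with hX
    have hXcard : X.ncard = s.card := by
      rw [hX, Set.ncard_coe_finset, Finset.card_image_of_injective _ Subtype.val_injective]
    have hXsub : X ⊆ P \ S := by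
      intro x hx
      simp only [hX, Finset.coe_image, Set.mem_image, Finset.mem_coe] at hx
      obtain ⟨⟨y, hy⟩, _, rfl⟩ := hx
      exact hy
    set NX : Set V := {w | ∃ x ∈ X, G.Adj x w} with hNX
    set S' : Set V := (S \ NX) ∪ X with hS'
    -- S ∩ NX equals the biUnion
    have hSNX : S ∩ NX = ↑(s.biUnion t) := by
      ext w
      simp only [Set.mem_inter_iff, hNX, Set.mem_setOf_eq, Finset.coe_biUnion,
        Set.mem_iUnion, Finset.mem_coe, ht, Finset.mem_inter,
        SimpleGraph.mem_neighborFinset, Set.mem_toFinset]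
      constructor
      · rintro ⟨hwS, x, hxX, hadj⟩
        simp only [hX, Finset.coe_image, Set.mem_image, Finset.mem_coe] at hxX
        obtain ⟨v, hv, rfl⟩ := hxX
        exact ⟨v, hv, hadj, hwS⟩
      · rintro ⟨v, hv, hadj, hwS⟩
        refine ⟨hwS, v.1, ?_, hadj⟩
        simp only [hX, Finset.coe_image, Set.mem_image, Finset.mem_coe]
        exact ⟨v, hv, rfl⟩
    have hXS : X ∩ S = ∅ := by
      ext x; simp only [Set.mem_inter_iff, Set.mem_empty_iff_false, iff_false]
      rintro ⟨hx, hxS⟩; exact (hXsub hx).2 hxS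
    -- S' is independent
    have hS'indep : IsIndep G S' := by
      rintro u (⟨huS, huN⟩ | huX) w (⟨hwS, hwN⟩ | hwX) hadj
      · exact hS u huS w hwS hadj
      · exact huN ⟨w, hwX, hadj.symm⟩
      · exact hwN ⟨u, huX, hadj⟩
      · exact hP u (hXsub huX).1 w (hXsub hwX).1 hadj
    -- cardinality computation
    have hdisj : Disjoint (S \ NX) X := by
      rw [Set.disjoint_iff_inter_eq_empty]
      ext x
      simp only [Set.mem_inter_iff, Set.mem_diff, Set.mem_empty_iff_false, iff_false]
      rintro ⟨⟨hxS, _⟩, hxX⟩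
      exact (hXsub hxX).2 hxS
    have hcard1 : S'.ncard = (S \ NX).ncard + X.ncard := by
      rw [hS']
      exact Set.ncard_union_eq hdisj (Set.toFinite _) (Set.toFinite _)
    have hcard2 : (S \ NX).ncard = S.ncard - (S ∩ NX).ncard := by
      rw [show S \ NX = S \ (S ∩ NX) by ext x; simp only [Set.mem_diff, Set.mem_inter_iff]; tauto]
      exact Set.ncard_diff (Set.inter_subset_left) (Set.toFinite _)
    have hcard3 : (S ∩ NX).ncard = (s.biUnion t).card := by
      rw [hSNX, Set.ncard_coe_finset]
    have hle : (S ∩ NX).ncard ≤ S.ncard :=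
      Set.ncard_le_ncard Set.inter_subset_left (Set.toFinite _)
    have hfin := indep_ncard_le hS'indep
    rw [← hScard] at hfin
    omega
  obtain ⟨f', hf'inj, hf'mem⟩ :=
    (Finset.all_card_le_biUnion_card_iff_exists_injective t).mp hall
  refine ⟨fun x => if h : x ∈ P \ S then f' ⟨x, h⟩ else x, ?_, ?_⟩
  · intro x hx y hy hxy
    simp only [dif_pos hx, dif_pos hy] at hxy
    exact Subtype.ext_iff.mp (hf'inj hxy)
  · intro v hv
    simp only [dif_pos hv]
    have := hf'mem ⟨v, hv⟩
    simp only [ht, Finset.mem_inter, SimpleGraph.mem_neighborFinset, Set.mem_toFinset] at this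
    exact this
lemma sym2_pair_disj {S : Set V} {v w fv fw x : V} (h1 : v ∉ S) (h2 : fv ∈ S)
    (h3 : w ∉ S) (h4 : fw ∈ S) (hvw : v ≠ w) (hf : fv ≠ fw) :
    ¬(x ∈ s(v, fv) ∧ x ∈ s(w, fw)) := by
  rintro ⟨hx1, hx2⟩
  rw [Sym2.mem_iff] at hx1 hx2
  rcases hx1 with rfl | rfl <;> rcases hx2 with rfl | rfl <;> simp_all

lemma konig_ge {A B : Set V} (hA : IsIndep G A) (hB : IsIndep G B)
    (hUnion : A ∪ B = Set.univ) (hDisj : A ∩ B = ∅) :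
    Fintype.card V ≤ indepNum G + matchNum G := by
  classical
  obtain ⟨S, hS, hScard⟩ := exists_max_indep G
  obtain ⟨fA, hfAinj, hfA⟩ := konig_side hS hScard hA
  obtain ⟨fB, hfBinj, hfB⟩ := konig_side hS hScard hB
  have hAB : ∀ x : V, x ∈ A ∨ x ∈ B := by
    intro x
    have : x ∈ A ∪ B := hUnion ▸ Set.mem_univ x
    exact this
  have hnAB : ∀ x : V, x ∈ A → x ∈ B → False := by
    intro x h1 h2
    have : x ∈ A ∩ B := ⟨h1, h2⟩
    rw [hDisj] at this
    exact this
  have hfAnA : ∀ v ∈ A \ S, fA v ∉ A := by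
    intro v hv hmem
    exact hA v hv.1 (fA v) hmem (hfA v hv).1
  have hfBA : ∀ v ∈ B \ S, fB v ∈ A := by
    intro v hv
    rcases hAB (fB v) with h | h
    · exact h
    · exact absurd (hfB v hv).1 (hB v hv.1 (fB v) h)
  set MA : Finset (Sym2 V) := (A \ S).toFinset.image (fun v => s(v, fA v)) with hMA
  set MB : Finset (Sym2 V) := (B \ S).toFinset.image (fun v => s(v, fB v)) with hMB
  set M : Finset (Sym2 V) := MA ∪ MB with hM
  have hmemA : ∀ e ∈ MA, ∃ v ∈ A \ S, e = s(v, fA v) := by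
    intro e he
    simp only [hMA, Finset.mem_image, Set.mem_toFinset] at he
    obtain ⟨v, hv, rfl⟩ := he
    exact ⟨v, hv, rfl⟩
  have hmemB : ∀ e ∈ MB, ∃ v ∈ B \ S, e = s(v, fB v) := by
    intro e he
    simp only [hMB, Finset.mem_image, Set.mem_toFinset] at he
    obtain ⟨v, hv, rfl⟩ := he
    exact ⟨v, hv, rfl⟩
  have hMmatch : IsMatchingSet G M := by
    constructor
    · intro e he
      rw [Finset.mem_coe, hM, Finset.mem_union] at he
      rcases he with he | he
      · obtain ⟨v, hv, rfl⟩ := hmemA e he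
        exact (hfA v hv).1
      · obtain ⟨v, hv, rfl⟩ := hmemB e he
        exact (hfB v hv).1
    · intro e he f hf hef x
      rw [hM, Finset.mem_union] at he hf
      rcases he with he | he <;> rcases hf with hf | hf
      · obtain ⟨v, hv, he'⟩ := hmemA e he
        obtain ⟨w, hw, hf'⟩ := hmemA f hf
        subst he'; subst hf'
        have hvw : v ≠ w := fun h => hef (by rw [h])
        exact sym2_pair_disj hv.2 (hfA v hv).2 hw.2 (hfA w hw).2 hvw
          (fun h => hvw (hfAinj hv hw h))
      · obtain ⟨v, hv, he'⟩ := hmemA e he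
        obtain ⟨w, hw, hf'⟩ := hmemB f hf
        subst he'; subst hf'
        exact sym2_pair_disj hv.2 (hfA v hv).2 hw.2 (hfB w hw).2
          (fun h => hnAB v hv.1 (h ▸ hw.1))
          (fun h => (hfAnA v hv) (h ▸ hfBA w hw))
      · obtain ⟨v, hv, he'⟩ := hmemB e he
        obtain ⟨w, hw, hf'⟩ := hmemA f hf
        subst he'; subst hf'
        exact sym2_pair_disj hv.2 (hfB v hv).2 hw.2 (hfA w hw).2
          (fun h => hnAB w hw.1 (h ▸ hv.1))
          (fun h => (hfAnA w hw) (h ▸ hfBA v hv))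
      · obtain ⟨v, hv, he'⟩ := hmemB e he
        obtain ⟨w, hw, hf'⟩ := hmemB f hf
        subst he'; subst hf'
        have hvw : v ≠ w := fun h => hef (by rw [h])
        exact sym2_pair_disj hv.2 (hfB v hv).2 hw.2 (hfB w hw).2 hvw
          (fun h => hvw (hfBinj hv hw h))
  have hcardA : MA.card = (A \ S).ncard := by
    rw [hMA, Finset.card_image_of_injOn, Set.ncard_eq_toFinset_card']
    intro v hv w hw h
    simp only [Finset.mem_coe, Set.mem_toFinset] at hv hw
    simp only [Sym2.eq_iff] at h
    rcases h with ⟨rfl, -⟩ | ⟨h1, h2⟩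
    · rfl
    · exact absurd (h1 ▸ (hfA w hw).2) hv.2
  have hcardB : MB.card = (B \ S).ncard := by
    rw [hMB, Finset.card_image_of_injOn, Set.ncard_eq_toFinset_card']
    intro v hv w hw h
    simp only [Finset.mem_coe, Set.mem_toFinset] at hv hw
    simp only [Sym2.eq_iff] at h
    rcases h with ⟨rfl, -⟩ | ⟨h1, h2⟩
    · rfl
    · exact absurd (h1 ▸ (hfB w hw).2) hv.2
  have hdisjM : Disjoint MA MB := by
    rw [Finset.disjoint_left]
    intro e heA heB
    obtain ⟨v, hv, h1⟩ := hmemA e heA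
    obtain ⟨w, hw, h2⟩ := hmemB e heB
    have h : s(v, fA v) = s(w, fB w) := h1.symm.trans h2
    rw [Sym2.eq_iff] at h
    rcases h with ⟨rfl, -⟩ | ⟨h3, h4⟩
    · exact hnAB v hv.1 hw.1
    · exact hv.2 (h3 ▸ (hfB w hw).2)
  have hMcard : M.card = (A \ S).ncard + (B \ S).ncard := by
    rw [hM, Finset.card_union_of_disjoint hdisjM, hcardA, hcardB]
  have hcompl : (A \ S) ∪ (B \ S) = (Sᶜ : Set V) := by
    ext x
    simp only [Set.mem_union, Set.mem_diff, Set.mem_compl_iff]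
    constructor
    · rintro (⟨-, h⟩ | ⟨-, h⟩) <;> exact h
    · intro h
      rcases hAB x with h1 | h1
      · exact Or.inl ⟨h1, h⟩
      · exact Or.inr ⟨h1, h⟩
  have hdisjAB : Disjoint (A \ S) (B \ S) := by
    rw [Set.disjoint_left]
    rintro x ⟨h1, -⟩ ⟨h2, -⟩
    exact hnAB x h1 h2
  have hsum : (A \ S).ncard + (B \ S).ncard = (Sᶜ : Set V).ncard := by
    rw [← hcompl]
    exact (Set.ncard_union_eq hdisjAB (Set.toFinite _) (Set.toFinite _)).symm
  have hfinal := matching_card_le hMmatch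
  rw [hMcard, hsum, ncard_compl, hScard] at hfinal
  have := ncard_le_card S
  rw [hScard] at this
  omega
lemma exists_neighbor (hConn : G.Connected) (hCard : 2 ≤ Fintype.card V) (v : V) :
    ∃ u, G.Adj v u := by
  obtain ⟨w, hw⟩ := Fintype.exists_ne_of_one_lt_card (by omega) v
  obtain ⟨p⟩ := hConn.preconnected v w
  cases p with
  | nil => exact absurd rfl hw
  | cons h _ => exact ⟨_, h⟩

lemma exists_exposed {M : Finset (Sym2 V)} (hM : IsMatchingSet G M)
    (h2 : 2 * M.card < Fintype.card V) : ∃ v : V, ∀ e ∈ M, v ∉ e := by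
  classical
  by_contra hc
  push_neg at hc
  have hsub : (Finset.univ : Finset V) ⊆ M.biUnion (fun e => {e.out.1, e.out.2}) := by
    intro x _
    obtain ⟨e, he, hxe⟩ := hc x
    have heq : s(e.out.1, e.out.2) = e := by
      change Quot.mk _ (Quot.out e) = e
      exact Quot.out_eq e
    rw [← heq, Sym2.mem_iff] at hxe
    simp only [Finset.mem_biUnion]
    exact ⟨e, he, by simp [hxe]⟩
  have h1 : Fintype.card V ≤ 2 * M.card := by
    calc Fintype.card V = (Finset.univ : Finset V).card := (Finset.card_univ).symm
      _ ≤ (M.biUnion (fun e => {e.out.1, e.out.2})).card := Finset.card_le_card hsub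
      _ ≤ ∑ e ∈ M, ({e.out.1, e.out.2} : Finset V).card := Finset.card_biUnion_le
      _ ≤ ∑ e ∈ M, 2 := Finset.sum_le_sum (fun e _ => Finset.card_insert_le _ _ |>.trans (by simp))
      _ = 2 * M.card := by rw [Finset.sum_const, smul_eq_mul, mul_comm]
  omega


end Helpers

theorem stmt_8 {V : Type*} [Fintype V] (G : SimpleGraph V) (A B : Set V)
    (hA : IsIndep G A) (hB : IsIndep G B) (hUnion : A ∪ B = Set.univ)
    (hDisj : A ∩ B = ∅) (hConn : G.Connected) (hCard : 2 ≤ Fintype.card V) :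
    2 * indepNum G > Fintype.card V ↔ 2 ≤ (core G).ncard := by
  classical
  have hKE : indepNum G + matchNum G = Fintype.card V :=
    le_antisymm (konig_le G) (konig_ge hA hB hUnion hDisj)
  constructor
  · -- hard direction
    intro hgt
    obtain ⟨M, hM, hMcard⟩ := exists_max_matching G
    have h2M : 2 * M.card < Fintype.card V := by omega
    obtain ⟨v, hv⟩ := exists_exposed hM h2M
    obtain ⟨u, hadj⟩ := exists_neighbor hConn hCard v
    -- u is covered by M
    have hu : ∃ e ∈ M, u ∈ e := by
      by_contra hc
      push_neg at hc
      have hnotmem : s(u, v) ∉ M := fun h => hc _ h (by simp)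
      have hins : IsMatchingSet G (insert s(u, v) M) := by
        constructor
        · intro e he
          rw [Finset.coe_insert, Set.mem_insert_iff] at he
          rcases he with rfl | he
          · exact hadj.symm
          · exact hM.1 he
        · intro e he f hf hef x hx
          rw [Finset.mem_insert] at he hf
          rcases he with rfl | he <;> rcases hf with rfl | hf
          · exact hef rfl
          · rcases (Sym2.mem_iff).mp hx.1 with rfl | rfl
            · exact hc f hf hx.2
            · exact hv f hf hx.2
          · rcases (Sym2.mem_iff).mp hx.2 with rfl | rfl
            · exact hc e he hx.1
            · exact hv e he hx.1
          · exact hM.2 e he f hf hef x hx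
      have := matching_card_le hins
      rw [Finset.card_insert_of_notMem hnotmem, hMcard] at this
      omega
    obtain ⟨e, heM, hue⟩ := hu
    set w := Sym2.Mem.other hue with hwdef
    have hespec : s(u, w) = e := Sym2.other_spec hue
    have hwe : w ∈ e := Sym2.other_mem hue
    have hwv : w ≠ v := fun h => hv e heM (h ▸ hwe)
    have huw : G.Adj u w := by
      have := hM.1 heM
      rw [← hespec, SimpleGraph.mem_edgeSet] at this
      exact this
    have hwu : w ≠ u := fun h => (huw.ne (h ▸ rfl)).elim
    have hvnotinE : v ∉ e := hv e heM
    have hvu : v ≠ u := fun h => hvnotinE (h ▸ hue)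
    -- the swapped matching
    set M' : Finset (Sym2 V) := insert s(v, u) (M.erase e) with hM'
    have hvuNot : s(v, u) ∉ M.erase e := by
      intro h
      exact hv _ (Finset.mem_of_mem_erase h) (by simp)
    have hM'match : IsMatchingSet G M' := by
      constructor
      · intro f hf
        rw [hM', Finset.coe_insert, Set.mem_insert_iff] at hf
        rcases hf with rfl | hf
        · exact hadj
        · exact hM.1 (Finset.mem_of_mem_erase hf)
      · intro f1 h1 f2 h2 h12 x hx
        rw [hM', Finset.mem_insert] at h1 h2
        rcases h1 with rfl | h1 <;> rcases h2 with rfl | h2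
        · exact h12 rfl
        · rcases (Sym2.mem_iff).mp hx.1 with rfl | rfl
          · exact hv f2 (Finset.mem_of_mem_erase h2) hx.2
          · exact hM.2 e heM f2 (Finset.mem_of_mem_erase h2)
              (Ne.symm (Finset.ne_of_mem_erase h2)) x ⟨hue, hx.2⟩
        · rcases (Sym2.mem_iff).mp hx.2 with rfl | rfl
          · exact hv f1 (Finset.mem_of_mem_erase h1) hx.1
          · exact hM.2 e heM f1 (Finset.mem_of_mem_erase h1)
              (Ne.symm (Finset.ne_of_mem_erase h1)) x ⟨hue, hx.1⟩
        · exact hM.2 f1 (Finset.mem_of_mem_erase h1) f2 (Finset.mem_of_mem_erase h2) h12 x hx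
    have hM'card : M'.card = matchNum G := by
      rw [hM', Finset.card_insert_of_notMem hvuNot, Finset.card_erase_of_mem heM, hMcard]
      have : 1 ≤ matchNum G := by
        rw [← hMcard]
        exact Finset.card_pos.mpr ⟨e, heM⟩
      omega
    -- w is exposed by M'
    have hwexp : ∀ f ∈ M', w ∉ f := by
      intro f hf hwf
      rw [hM', Finset.mem_insert] at hf
      rcases hf with rfl | hf
      · rcases (Sym2.mem_iff).mp hwf with h | h
        · exact hwv h
        · exact hwu h
      · exact hM.2 e heM f (Finset.mem_of_mem_erase hf)
          (Ne.symm (Finset.ne_of_mem_erase hf)) w ⟨hwe, hwf⟩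
    have hvcore : v ∈ core G := exposed_mem_core hM hMcard hKE hv
    have hwcore : w ∈ core G := exposed_mem_core hM'match hM'card hKE hwexp
    have hsub : ({v, w} : Set V) ⊆ core G := by
      rintro x (rfl | rfl)
      · exact hvcore
      · exact hwcore
    calc 2 = ({v, w} : Set V).ncard := (Set.ncard_pair (Ne.symm hwv)).symm
      _ ≤ (core G).ncard := Set.ncard_le_ncard hsub (Set.toFinite _)
  · -- easy direction
    intro hcore
    by_contra hle
    push_neg at hle
    have hAle := indep_ncard_le hA
    have hBle := indep_ncard_le hB
    have hsum : A.ncard + B.ncard = Fintype.card V := by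
      have hd : Disjoint A B := Set.disjoint_iff_inter_eq_empty.mpr hDisj
      have := Set.ncard_union_eq hd (Set.toFinite _) (Set.toFinite _)
      rw [hUnion, Set.ncard_univ, Nat.card_eq_fintype_card] at this
      omega
    have hAmax : A.ncard = indepNum G := by omega
    have hBmax : B.ncard = indepNum G := by omega
    have hcoreAB : core G ⊆ A ∩ B := fun x hx =>
      ⟨hx A ⟨hA, hAmax⟩, hx B ⟨hB, hBmax⟩⟩
    have : (core G).ncard = 0 := by
      have : core G = ∅ := Set.subset_eq_empty (hDisj ▸ hcoreAB) rfl
      rw [this, Set.ncard_empty]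
    omega
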